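/- For the learning rates α_t = (H+1)/(H+t) with H ≥ 1 and weights α_t^i := α_i · ∏_{j=i+1}^t (1 − α_j), for every t ≥ 1 the sum of squared weights satisfies ∑_{i=1}^t (α_t^i)^2 ≤ 2H/t. -/

import Mathlib

open Finset

noncomputable def lr (H : ℕ) (t : ℕ) : ℝ := ((H : ℝ) + 1) / ((H : ℝ) + t)

noncomputable def w (H : ℕ) (t i : ℕ) : ℝ :=
  lr H i * ∏ j ∈ Finset.Icc (i + 1) t, (1 - lr H j)

noncomputable def w0 (H : ℕ) (t : ℕ) : ℝ :=
  ∏ j ∈ Finset.Icc 1 t, (1 - lr H j)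

lemma lr_pos (H : ℕ) (hH : 1 ≤ H) (j : ℕ) : 0 < lr H j := by
  unfold lr
  have : (1:ℝ) ≤ H := by exact_mod_cast hH
  have : (0:ℝ) ≤ j := Nat.cast_nonneg j
  positivity

lemma one_sub_lr_nonneg (H : ℕ) (hH : 1 ≤ H) {j : ℕ} (hj : 1 ≤ j) :
    0 ≤ 1 - lr H j := by
  unfold lr
  have h1 : (1:ℝ) ≤ H := by exact_mod_cast hH
  have h2 : (1:ℝ) ≤ j := by exact_mod_cast hj
  have hpos : (0:ℝ) < (H:ℝ) + j := by linarith
  rw [sub_nonneg, div_le_one hpos]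
  linarith

lemma w_nonneg (H : ℕ) (hH : 1 ≤ H) (t i : ℕ) : 0 ≤ w H t i := by
  unfold w
  apply mul_nonneg (lr_pos H hH i).le
  apply Finset.prod_nonneg
  intro j hj
  exact one_sub_lr_nonneg H hH (le_trans (Nat.one_le_iff_ne_zero.mpr (by omega))
    (Finset.mem_Icc.mp hj).1)

lemma lr_one (H : ℕ) (hH : 1 ≤ H) : lr H 1 = 1 := by
  unfold lr
  have h1 : (1:ℝ) ≤ H := by exact_mod_cast hH
  rw [Nat.cast_one, div_self (by linarith)]

lemma sum_w_eq_one (H : ℕ) (hH : 1 ≤ H) (t : ℕ) (ht : 1 ≤ t) :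
    ∑ i ∈ Finset.Icc 1 t, w H t i = 1 := by
  induction t, ht using Nat.le_induction with
  | base =>
    simp [w, lr_one H hH, Finset.Icc_eq_empty (by omega : ¬ (2:ℕ) ≤ 1)]
  | succ t ht ih =>
    rw [Finset.sum_Icc_succ_top (by omega)]
    have hw : ∀ i ∈ Finset.Icc 1 t, w H (t+1) i = w H t i * (1 - lr H (t+1)) := by
      intro i hi
      obtain ⟨hi1, hi2⟩ := Finset.mem_Icc.mp hi
      unfold w
      rw [Finset.prod_Icc_succ_top (by omega : i + 1 ≤ t + 1)]
      ring
    rw [Finset.sum_congr rfl hw, ← Finset.sum_mul, ih]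
    unfold w
    rw [Finset.Icc_eq_empty (by omega : ¬ (t+1+1) ≤ t + 1)]
    simp

lemma w_step (H : ℕ) (hH : 1 ≤ H) {t i : ℕ} (hi : 1 ≤ i) (hit : i < t) :
    w H t i = ((i:ℝ) / ((H:ℝ) + i)) * w H t (i + 1) := by
  unfold w
  have hsplit : Finset.Icc (i+1) t = insert (i+1) (Finset.Icc (i+2) t) := by
    ext x; simp [Finset.mem_Icc, Finset.mem_insert]; omega
  rw [hsplit, Finset.prod_insert (by simp)]
  have h1 : (1:ℝ) ≤ H := by exact_mod_cast hH
  have h2 : (1:ℝ) ≤ i := by exact_mod_cast hi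
  have key : lr H i * (1 - lr H (i+1)) = ((i:ℝ) / ((H:ℝ) + i)) * lr H (i+1) := by
    unfold lr
    push_cast
    field_simp
    ring
  calc lr H i * ((1 - lr H (i+1)) * ∏ j ∈ Finset.Icc (i+2) t, (1 - lr H j))
      = (lr H i * (1 - lr H (i+1))) * ∏ j ∈ Finset.Icc (i+2) t, (1 - lr H j) := by ring
    _ = ((i:ℝ) / ((H:ℝ) + i)) * (lr H (i+1) * ∏ j ∈ Finset.Icc (i+2) t, (1 - lr H j)) := by
        rw [key]; ring

lemma w_le_lr (H : ℕ) (hH : 1 ≤ H) {t i : ℕ} (hi : 1 ≤ i) (hit : i ≤ t) :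
    w H t i ≤ lr H t := by
  have h1 : (1:ℝ) ≤ H := by exact_mod_cast hH
  -- downward induction on t - i
  obtain ⟨k, hk⟩ : ∃ k, t = i + k := ⟨t - i, by omega⟩
  subst hk
  clear hit
  induction k generalizing i with
  | zero =>
    unfold w
    rw [Finset.Icc_eq_empty (by omega : ¬ (i+1) ≤ i + 0)]
    simp
  | succ k ih =>
    have hlt : i < i + (k + 1) := by omega
    rw [w_step H hH hi hlt]
    have h2 : (0:ℝ) ≤ i := Nat.cast_nonneg i
    have hfrac : (i:ℝ) / ((H:ℝ) + i) ≤ 1 := by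
      rw [div_le_one (by linarith)]; linarith
    have hrec : w H (i + (k+1)) (i+1) ≤ lr H (i + (k+1)) := by
      have := ih (i := i + 1) (by omega)
      simpa [show i + 1 + k = i + (k+1) by omega] using this
    calc ((i:ℝ) / ((H:ℝ) + i)) * w H (i + (k+1)) (i+1)
        ≤ 1 * w H (i + (k+1)) (i+1) := by
          apply mul_le_mul_of_nonneg_right hfrac (w_nonneg H hH _ _)
      _ = w H (i + (k+1)) (i+1) := one_mul _
      _ ≤ lr H (i + (k+1)) := hrec

lemma lr_le (H : ℕ) (hH : 1 ≤ H) (t : ℕ) (ht : 1 ≤ t) :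
    lr H t ≤ 2 * (H:ℝ) / t := by
  unfold lr
  have h1 : (1:ℝ) ≤ H := by exact_mod_cast hH
  have h2 : (1:ℝ) ≤ t := by exact_mod_cast ht
  rw [div_le_div_iff₀ (by linarith) (by linarith)]
  nlinarith

theorem sum_sq_weights_le (H : ℕ) (hH : 1 ≤ H) (t : ℕ) (ht : 1 ≤ t) :
    ∑ i ∈ Finset.Icc 1 t, (w H t i) ^ 2 ≤ 2 * (H : ℝ) / t := by
  have hbound : ∀ i ∈ Finset.Icc 1 t, (w H t i) ^ 2 ≤ (2 * (H:ℝ) / t) * w H t i := by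
    intro i hi
    obtain ⟨hi1, hi2⟩ := Finset.mem_Icc.mp hi
    have hle : w H t i ≤ 2 * (H:ℝ) / t :=
      le_trans (w_le_lr H hH hi1 hi2) (lr_le H hH t ht)
    have := mul_le_mul_of_nonneg_right hle (w_nonneg H hH t i)
    calc (w H t i) ^ 2 = w H t i * w H t i := sq (w H t i)
      _ ≤ (2 * (H:ℝ) / t) * w H t i := this
  calc ∑ i ∈ Finset.Icc 1 t, (w H t i) ^ 2
      ≤ ∑ i ∈ Finset.Icc 1 t, (2 * (H:ℝ) / t) * w H t i := Finset.sum_le_sum hbound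
    _ = (2 * (H:ℝ) / t) * ∑ i ∈ Finset.Icc 1 t, w H t i := by rw [Finset.mul_sum]
    _ = 2 * (H:ℝ) / t := by rw [sum_w_eq_one H hH t ht, mul_one]
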